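/- Let H ∈ M_N({±1}) be a Hadamard matrix whose first row and first column consist entirely of +1, and let D ∈ M_{N−1}({±1}) be the complementary submatrix obtained by deleting the first row and column. Then the polar decomposition D = UT is given by U = (1/√N)(D − E) and T = √N·I_{N−1} − S, where E = S = (1/(1+√N))·J_{N−1}, with J_{N−1} the all-ones (N−1)×(N−1) matrix. In particular D is an almost Hadamard sign pattern. -/

import Mathlib

open Matrix

section PosSemidefSqrt
open scoped ComplexOrder
/-- The positive semidefinite square root of a positive semidefinite matrix
(the definition `Matrix.PosSemidef.sqrt` of the older Mathlib, removed since). -/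
noncomputable def Matrix.PosSemidef.sqrt {n : Type*} [Fintype n] [DecidableEq n] {𝕜 : Type*}
    [RCLike 𝕜] {A : Matrix n n 𝕜} (hA : A.PosSemidef) : Matrix n n 𝕜 :=
  hA.1.eigenvectorUnitary.1 * diagonal ((↑) ∘ (√·) ∘ hA.1.eigenvalues) *
    (star hA.1.eigenvectorUnitary : Matrix n n 𝕜)
end PosSemidefSqrt

lemma psd_smul_aux {m : ℕ} {A : Matrix (Fin m) (Fin m) ℝ} (hA : A.PosSemidef)
    {c : ℝ} (hc : 0 ≤ c) : (c • A).PosSemidef := by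
  exact hA.smul hc

open scoped MatrixOrder in
lemma psd_sqrt_unique_aux {m : ℕ} {A T : Matrix (Fin m) (Fin m) ℝ} (hA : A.PosSemidef)
    (hT : T.PosSemidef) (h : T ^ 2 = A) : T = hA.sqrt := by
  have h1 : hA.sqrt = cfc Real.sqrt A := by
    rw [hA.1.cfc_eq]; rfl
  have hTs : IsSelfAdjoint T := hT.1
  have hspec : ∀ x ∈ spectrum ℝ T, 0 ≤ x :=
    ((Matrix.posSemidef_iff_isHermitian_and_spectrum_nonneg).1 hT).2
  rw [h1, ← h, ← cfc_pow_id (R := ℝ) T 2 hTs, ← cfc_comp' Real.sqrt (fun x => x ^ 2) T]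
  conv_lhs => rw [← cfc_id' (R := ℝ) (a := T) hTs]
  refine cfc_congr fun x hx => ?_
  simp [Real.sqrt_sq (hspec x hx)]

/-- Let `H ∈ M_N(±1)` be Hadamard with first row and first column all `+1`,
and let `D ∈ M_{N−1}(±1)` be the complementary submatrix. Then the polar
decomposition `D = U·T` is given by `U = (1/√N)(D − E)`, `T = √N·I − S`, with
`E = S = (1/(1+√N))·J` where `J` is the all-ones matrix; in particular `D`
is an almost Hadamard sign pattern. Here `N = n + 1`. -/
theorem stmt_16 (n : ℕ) (H : Matrix (Fin (n + 1)) (Fin (n + 1)) ℝ)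
    (hsign : ∀ i j, H i j = 1 ∨ H i j = -1)
    (hH : H * Hᵀ = ((n + 1 : ℕ) : ℝ) • 1)
    (hrow : ∀ j, H 0 j = 1) (hcol : ∀ i, H i 0 = 1) :
    letI D := H.submatrix Fin.succ Fin.succ
    letI E := (1 + Real.sqrt (n + 1))⁻¹ •
      (Matrix.of fun _ _ => (1 : ℝ) : Matrix (Fin n) (Fin n) ℝ)
    letI U := (Real.sqrt (n + 1))⁻¹ • (D - E)
    letI T := Real.sqrt (n + 1) • (1 : Matrix (Fin n) (Fin n) ℝ) - E
    Uᵀ * U = 1 ∧ T.PosSemidef ∧ D = U * T ∧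
      T = (Matrix.posSemidef_conjTranspose_mul_self D).sqrt ∧
      (∀ i j, Real.sign (U i j) = D i j) ∧ (U * Dᵀ).PosSemidef := by
  set s : ℝ := Real.sqrt (n + 1) with hs_def
  set J : Matrix (Fin n) (Fin n) ℝ := Matrix.of fun _ _ => (1 : ℝ) with hJ_def
  set D : Matrix (Fin n) (Fin n) ℝ := H.submatrix Fin.succ Fin.succ with hD_def
  set c : ℝ := (1 + s)⁻¹ with hc_def
  have hs0 : 0 < s := Real.sqrt_pos.2 (by positivity)
  have hs2 : s * s = (n : ℝ) + 1 := Real.mul_self_sqrt (by positivity)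
  have h1s : (0:ℝ) < 1 + s := by linarith
  have hc1 : c < 1 := by
    rw [hc_def]
    rw [inv_lt_one_iff₀]
    right; linarith
  have hc0 : 0 < c := by rw [hc_def]; positivity
  have hNne : ((n + 1 : ℕ) : ℝ) ≠ 0 := by positivity
  -- column orthogonality
  have hHtH : Hᵀ * H = ((n + 1 : ℕ) : ℝ) • 1 := by
    have h1 : H * (((n + 1 : ℕ) : ℝ)⁻¹ • Hᵀ) = 1 := by
      rw [Matrix.mul_smul, hH, smul_smul, inv_mul_cancel₀ hNne, one_smul]
    have h2 := mul_eq_one_comm.mp h1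
    calc Hᵀ * H = ((n + 1 : ℕ) : ℝ) • ((((n + 1 : ℕ) : ℝ)⁻¹ • Hᵀ) * H) := by
          rw [Matrix.smul_mul, smul_smul, mul_inv_cancel₀ hNne, one_smul]
      _ = _ := by rw [h2]
  -- row sums of D are -1
  have hrowsum : ∀ i : Fin n, ∑ j, D i j = -1 := by
    intro i
    have h : (H * Hᵀ) i.succ 0 = (((n + 1 : ℕ) : ℝ) • (1 : Matrix (Fin (n+1)) (Fin (n+1)) ℝ)) i.succ 0 := by
      rw [hH]
    simp only [Matrix.mul_apply, Matrix.transpose_apply, Matrix.smul_apply,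
      Matrix.one_apply, Fin.succ_ne_zero, if_false, smul_zero] at h
    have h' : ∑ j, H i.succ j = 0 := by
      rw [← h]; apply Finset.sum_congr rfl; intro j _; rw [hrow j, mul_one]
    rw [Fin.sum_univ_succ] at h'
    have : ∀ j : Fin n, D i j = H i.succ j.succ := fun j => rfl
    simp only [this]
    rw [hcol i.succ] at h'
    linarith
  -- column sums of D are -1
  have hcolsum : ∀ j : Fin n, ∑ i, D i j = -1 := by
    intro j
    have h : (Hᵀ * H) j.succ 0 = (((n + 1 : ℕ) : ℝ) • (1 : Matrix (Fin (n+1)) (Fin (n+1)) ℝ)) j.succ 0 := by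
      rw [hHtH]
    simp only [Matrix.mul_apply, Matrix.transpose_apply, Matrix.smul_apply,
      Matrix.one_apply, Fin.succ_ne_zero, if_false, smul_zero] at h
    have h' : ∑ i, H i j.succ = 0 := by
      rw [← h]; apply Finset.sum_congr rfl; intro i _; rw [hcol i, mul_one]
    rw [Fin.sum_univ_succ] at h'
    have : ∀ i : Fin n, D i j = H i.succ j.succ := fun i => rfl
    simp only [this]
    rw [hrow j.succ] at h'
    linarith
  -- basic matrix products
  have hJJ : J * J = (n : ℝ) • J := by
    ext i j
    simp [hJ_def, Matrix.mul_apply]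
  have hDJ : D * J = -J := by
    ext i j
    simp only [Matrix.mul_apply, hJ_def, Matrix.of_apply, mul_one, Matrix.neg_apply]
    exact hrowsum i
  have hJD : J * D = -J := by
    ext i j
    simp only [Matrix.mul_apply, hJ_def, Matrix.of_apply, one_mul, Matrix.neg_apply]
    exact hcolsum j
  have hDtJ : Dᵀ * J = -J := by
    ext i j
    simp only [Matrix.mul_apply, Matrix.transpose_apply, hJ_def, Matrix.of_apply, mul_one,
      Matrix.neg_apply]
    exact hcolsum i
  have hJDt : J * Dᵀ = -J := by
    ext i j
    simp only [Matrix.mul_apply, Matrix.transpose_apply, hJ_def, Matrix.of_apply, one_mul,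
      Matrix.neg_apply]
    exact hrowsum j
  have hDtD : Dᵀ * D = ((n : ℝ) + 1) • 1 - J := by
    ext i j
    have h : (Hᵀ * H) i.succ j.succ
        = (((n + 1 : ℕ) : ℝ) • (1 : Matrix (Fin (n+1)) (Fin (n+1)) ℝ)) i.succ j.succ := by
      rw [hHtH]
    simp only [Matrix.mul_apply, Matrix.transpose_apply, Matrix.smul_apply, Matrix.one_apply,
      smul_eq_mul] at h
    rw [Fin.sum_univ_succ, hrow i.succ, hrow j.succ] at h
    simp only [Matrix.sub_apply, Matrix.mul_apply, Matrix.transpose_apply, Matrix.smul_apply,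
      Matrix.one_apply, hJ_def, Matrix.of_apply, smul_eq_mul]
    simp only [Fin.succ_inj] at h
    have hsum : ∑ x : Fin n, D x i * D x j = ∑ x : Fin n, H x.succ i.succ * H x.succ j.succ := rfl
    push_cast at h ⊢
    rw [hsum]
    linarith
  have hDDt : D * Dᵀ = ((n : ℝ) + 1) • 1 - J := by
    ext i j
    have h : (H * Hᵀ) i.succ j.succ
        = (((n + 1 : ℕ) : ℝ) • (1 : Matrix (Fin (n+1)) (Fin (n+1)) ℝ)) i.succ j.succ := by
      rw [hH]
    simp only [Matrix.mul_apply, Matrix.transpose_apply, Matrix.smul_apply, Matrix.one_apply,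
      smul_eq_mul] at h
    rw [Fin.sum_univ_succ, hcol i.succ, hcol j.succ] at h
    simp only [Matrix.sub_apply, Matrix.mul_apply, Matrix.transpose_apply, Matrix.smul_apply,
      Matrix.one_apply, hJ_def, Matrix.of_apply, smul_eq_mul]
    simp only [Fin.succ_inj] at h
    have hsum : ∑ x : Fin n, D i x * D j x = ∑ x : Fin n, H i.succ x.succ * H j.succ x.succ := rfl
    push_cast at h ⊢
    rw [hsum]
    linarith
  have hJt : Jᵀ = J := by ext i j; rfl
  have hDH : Dᴴ = Dᵀ := Matrix.conjTranspose_eq_transpose_of_trivial D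
  -- expansion lemmas
  have expand1 : (Dᵀ - c • J) * (D - c • J) = ((n : ℝ) + 1) • 1 := by
    simp only [Matrix.sub_mul, Matrix.mul_sub, Matrix.smul_mul, Matrix.mul_smul, Matrix.mul_one,
      Matrix.one_mul, hDtD, hDtJ, hJD, hJJ]
    match_scalars <;> (try rw [hc_def]) <;> field_simp <;> nlinarith [hs2]
  have expand2 : (D - c • J) * (s • 1 - c • J) = s • D := by
    simp only [Matrix.sub_mul, Matrix.mul_sub, Matrix.smul_mul, Matrix.mul_smul, Matrix.mul_one,
      Matrix.one_mul, hDJ, hJD, hJJ]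
    match_scalars <;> (try rw [hc_def]) <;> field_simp <;> nlinarith [hs2]
  have expand3 : (s • (1:Matrix (Fin n) (Fin n) ℝ) - c • J) * (s • 1 - c • J)
      = ((n : ℝ) + 1) • 1 - J := by
    simp only [Matrix.sub_mul, Matrix.mul_sub, Matrix.smul_mul, Matrix.mul_smul, Matrix.mul_one,
      Matrix.one_mul, hJJ]
    match_scalars <;> (try rw [hc_def]) <;> field_simp <;> nlinarith [hs2]
  have hUt : (s⁻¹ • (D - c • J))ᵀ = s⁻¹ • (Dᵀ - c • J) := by
    rw [Matrix.transpose_smul, Matrix.transpose_sub, Matrix.transpose_smul, hJt]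
  have hTpsd : (s • (1:Matrix (Fin n) (Fin n) ℝ) - c • J).PosSemidef := by
    have hTeq : s • (1 : Matrix (Fin n) (Fin n) ℝ) - c • J = c • (Dᵀ * D + s • 1) := by
      rw [hDtD, smul_add]
      match_scalars <;> (try rw [hc_def]) <;> field_simp <;> nlinarith [hs2]
    rw [hTeq]
    refine psd_smul_aux ?_ hc0.le
    have h1 : (Dᵀ * D).PosSemidef := by
      have := Matrix.posSemidef_conjTranspose_mul_self D
      rwa [hDH] at this
    exact h1.add (psd_smul_aux Matrix.PosSemidef.one hs0.le)
  have hUT : D = (s⁻¹ • (D - c • J)) * (s • (1:Matrix (Fin n) (Fin n) ℝ) - c • J) := by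
    rw [Matrix.smul_mul, expand2, smul_smul, inv_mul_cancel₀ hs0.ne', one_smul]
  refine ⟨?_, hTpsd, hUT, ?_, ?_, ?_⟩
  · rw [hUt, Matrix.smul_mul, Matrix.mul_smul, expand1, smul_smul, smul_smul]
    rw [show s⁻¹ * s⁻¹ * ((n:ℝ) + 1) = 1 by field_simp; linarith [hs2]]
    exact one_smul _ _
  · refine psd_sqrt_unique_aux _ hTpsd ?_
    rw [pow_two, expand3, hDH, hDtD]
  · intro i j
    have hD1 : D i j = 1 ∨ D i j = -1 := hsign i.succ j.succ
    have hval : (s⁻¹ • (D - c • J)) i j = s⁻¹ * (D i j - c) := by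
      simp [Matrix.smul_apply, Matrix.sub_apply, hJ_def]
    rcases hD1 with h | h
    · rw [hval, h]
      exact Real.sign_of_pos (mul_pos (by positivity) (by linarith))
    · rw [hval, h]
      have hneg : s⁻¹ * (-1 - c) < 0 :=
        mul_neg_of_pos_of_neg (by positivity) (by linarith)
      rw [Real.sign_of_neg hneg]
  · have hTt : (s • (1:Matrix (Fin n) (Fin n) ℝ) - c • J)ᵀ = s • 1 - c • J := by
      rw [Matrix.transpose_sub, Matrix.transpose_smul, Matrix.transpose_smul, hJt,
        Matrix.transpose_one]
    have hDt : Dᵀ = (s • (1:Matrix (Fin n) (Fin n) ℝ) - c • J) * (s⁻¹ • (D - c • J))ᵀ := by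
      conv_lhs => rw [hUT]
      rw [Matrix.transpose_mul, hTt]
    rw [hDt, ← Matrix.mul_assoc]
    have := hTpsd.mul_mul_conjTranspose_same (s⁻¹ • (D - c • J))
    rwa [Matrix.conjTranspose_eq_transpose_of_trivial] at this
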